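/- For real numbers a, b with 0 ≤ a ≤ b ≤ 1/2, we have ∫_{[0,1]³} 𝟙{|x₀ − x₁| ≤ a}·𝟙{|x₀ − x₂| ≤ b} dx₀ dx₁ dx₂ = 4ab − a²b − 2ab² − a³/3. -/

import Mathlib

open MeasureTheory

lemma two_star_inner_int (r c : ℝ) (hr : 0 ≤ r) (hc0 : 0 ≤ c) (hc1 : c ≤ 1) :
    ∫ x in (0:ℝ)..1, (if |c - x| ≤ r then (1:ℝ) else 0)
      = min (c + r) 1 - max (c - r) 0 := by
  have heq : ∀ x : ℝ, (if |c - x| ≤ r then (1:ℝ) else 0)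
      = (Set.Icc (c - r) (c + r)).indicator (fun _ => (1:ℝ)) x := by
    intro x
    simp only [Set.indicator_apply]
    exact if_congr (by rw [Set.mem_Icc, abs_le]; constructor <;> intro h <;>
      exact ⟨by linarith [h.1, h.2], by linarith [h.1, h.2]⟩) rfl rfl
  simp only [heq]
  rw [intervalIntegral.integral_of_le (by norm_num : (0:ℝ) ≤ 1)]
  rw [setIntegral_indicator measurableSet_Icc, Set.inter_comm]
  rw [setIntegral_const, smul_eq_mul, mul_one]
  have hML : max (c - r) 0 ≤ min (c + r) 1 := by
    simp only [max_le_iff, le_min_iff]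
    constructor <;> constructor <;> linarith
  have hsub1 : Set.Ioc (max (c - r) 0) (min (c + r) 1) ⊆ Set.Icc (c - r) (c + r) ∩ Set.Ioc 0 1 := by
    intro x hx
    obtain ⟨h1, h2⟩ := hx
    refine ⟨⟨?_, ?_⟩, ?_, ?_⟩
    · exact le_of_lt (lt_of_le_of_lt (le_max_left _ _) h1)
    · exact le_trans h2 (min_le_left _ _)
    · exact lt_of_le_of_lt (le_max_right _ _) h1
    · exact le_trans h2 (min_le_right _ _)
  have hsub2 : Set.Icc (c - r) (c + r) ∩ Set.Ioc 0 1 ⊆ Set.Icc (max (c - r) 0) (min (c + r) 1) := by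
    rintro x ⟨⟨h1, h2⟩, h3, h4⟩
    exact ⟨max_le h1 h3.le, le_min h2 h4⟩
  have hv : volume (Set.Icc (c - r) (c + r) ∩ Set.Ioc 0 1)
      = ENNReal.ofReal (min (c + r) 1 - max (c - r) 0) := by
    apply le_antisymm
    · calc volume _ ≤ volume (Set.Icc (max (c - r) 0) (min (c + r) 1)) := measure_mono hsub2
        _ = _ := Real.volume_Icc
    · calc ENNReal.ofReal (min (c + r) 1 - max (c - r) 0)
          = volume (Set.Ioc (max (c - r) 0) (min (c + r) 1)) := Real.volume_Ioc.symm
        _ ≤ _ := measure_mono hsub1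
  rw [measureReal_def, hv, ENNReal.toReal_ofReal (by linarith)]

lemma two_star_quad_int (c0 c1 c2 l u : ℝ) :
    ∫ x in l..u, (c0 + c1 * x + c2 * x ^ 2)
      = (c0 * u + c1 / 2 * u ^ 2 + c2 / 3 * u ^ 3)
        - (c0 * l + c1 / 2 * l ^ 2 + c2 / 3 * l ^ 3) := by
  have hd : ∀ x : ℝ, HasDerivAt (fun y => c0 * y + c1 / 2 * y ^ 2 + c2 / 3 * y ^ 3)
      (c0 + c1 * x + c2 * x ^ 2) x := by
    intro x
    have h1 : HasDerivAt (fun y : ℝ => c0 * y) c0 x := by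
      simpa using (hasDerivAt_id x).const_mul c0
    have h2 : HasDerivAt (fun y : ℝ => c1 / 2 * y ^ 2) (c1 * x) x := by
      have := (hasDerivAt_pow 2 x).const_mul (c1 / 2)
      refine this.congr_deriv ?_
      simp
      ring
    have h3 : HasDerivAt (fun y : ℝ => c2 / 3 * y ^ 3) (c2 * x ^ 2) x := by
      have := (hasDerivAt_pow 3 x).const_mul (c2 / 3)
      refine this.congr_deriv ?_
      simp
      ring
    exact (h1.add h2).add h3
  rw [intervalIntegral.integral_eq_sub_of_hasDerivAt (fun x _ => hd x)]
  exact (Continuous.intervalIntegrable (by continuity) _ _)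

/-- The integral `Int_S(a,b)` for the colored double tree given by a two-star, for
`0 ≤ a ≤ b ≤ 1/2`. -/
theorem two_star_integral (a b : ℝ) (ha : 0 ≤ a) (hab : a ≤ b) (hb : b ≤ 1/2) :
    (∫ x₀ in (0:ℝ)..1, ∫ x₁ in (0:ℝ)..1, ∫ x₂ in (0:ℝ)..1,
        (if |x₀ - x₁| ≤ a then (1:ℝ) else 0) * (if |x₀ - x₂| ≤ b then (1:ℝ) else 0))
      = 4*a*b - a^2*b - 2*a*b^2 - a^3/3 := by
  have hb0 : 0 ≤ b := ha.trans hab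
  set g : ℝ → ℝ :=
    fun x => (min (x + a) 1 - max (x - a) 0) * (min (x + b) 1 - max (x - b) 0) with hg
  have hgc : Continuous g := by
    apply Continuous.mul <;> apply Continuous.sub
    · exact (continuous_id.add continuous_const).min continuous_const
    · exact (continuous_id.sub continuous_const).max continuous_const
    · exact (continuous_id.add continuous_const).min continuous_const
    · exact (continuous_id.sub continuous_const).max continuous_const
  -- Step A: reduce to the one-dimensional integral of g
  have stepA : (∫ x₀ in (0:ℝ)..1, ∫ x₁ in (0:ℝ)..1, ∫ x₂ in (0:ℝ)..1,
        (if |x₀ - x₁| ≤ a then (1:ℝ) else 0) * (if |x₀ - x₂| ≤ b then (1:ℝ) else 0))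
      = ∫ x in (0:ℝ)..1, g x := by
    apply intervalIntegral.integral_congr
    intro x hx
    rw [Set.uIcc_of_le (by norm_num : (0:ℝ) ≤ 1)] at hx
    obtain ⟨hx0, hx1⟩ := hx
    have hIb := two_star_inner_int b x hb0 hx0 hx1
    have hIa := two_star_inner_int a x ha hx0 hx1
    simp only [intervalIntegral.integral_const_mul, hIb]
    rw [intervalIntegral.integral_mul_const, hIa]
  rw [stepA]
  -- integrability of g on each subinterval
  have hgi : ∀ l u : ℝ, IntervalIntegrable g volume l u := fun l u =>
    hgc.intervalIntegrable l u
  -- ordering of the split points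
  have o1 : (0:ℝ) ≤ a := ha
  have o2 : a ≤ b := hab
  have o3 : b ≤ 1 - b := by linarith
  have o4 : (1:ℝ) - b ≤ 1 - a := by linarith
  have o5 : (1:ℝ) - a ≤ 1 := by linarith
  -- split the integral
  have split : (∫ x in (0:ℝ)..1, g x)
      = (∫ x in (0:ℝ)..a, g x) + ((∫ x in a..b, g x) + ((∫ x in b..(1-b), g x)
        + ((∫ x in (1-b)..(1-a), g x) + (∫ x in (1-a)..(1:ℝ), g x)))) := by
    rw [intervalIntegral.integral_add_adjacent_intervals (hgi _ _) (hgi _ _),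
        intervalIntegral.integral_add_adjacent_intervals (hgi _ _) (hgi _ _),
        intervalIntegral.integral_add_adjacent_intervals (hgi _ _) (hgi _ _),
        intervalIntegral.integral_add_adjacent_intervals (hgi _ _) (hgi _ _)]
  have p1 : (∫ x in (0:ℝ)..a, g x)
      = ∫ x in (0:ℝ)..a, (a*b + (a+b) * x + 1 * x ^ 2) := by
    apply intervalIntegral.integral_congr
    intro x hx
    rw [Set.uIcc_of_le o1] at hx
    obtain ⟨h1, h2⟩ := hx
    rw [hg]
    simp only
    rw [min_eq_left (by linarith), max_eq_right (by linarith),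
        min_eq_left (by linarith), max_eq_right (by linarith)]
    ring
  have p2 : (∫ x in a..b, g x)
      = ∫ x in a..b, (2*a*b + (2*a) * x + 0 * x ^ 2) := by
    apply intervalIntegral.integral_congr
    intro x hx
    rw [Set.uIcc_of_le o2] at hx
    obtain ⟨h1, h2⟩ := hx
    rw [hg]
    simp only
    rw [min_eq_left (by linarith), max_eq_left (by linarith),
        min_eq_left (by linarith), max_eq_right (by linarith)]
    ring
  have p3 : (∫ x in b..(1-b), g x)
      = ∫ x in b..(1-b), (4*a*b + 0 * x + 0 * x ^ 2) := by
    apply intervalIntegral.integral_congr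
    intro x hx
    rw [Set.uIcc_of_le o3] at hx
    obtain ⟨h1, h2⟩ := hx
    rw [hg]
    simp only
    rw [min_eq_left (by linarith), max_eq_left (by linarith),
        min_eq_left (by linarith), max_eq_left (by linarith)]
    ring
  have p4 : (∫ x in (1-b)..(1-a), g x)
      = ∫ x in (1-b)..(1-a), ((2*a + 2*a*b) + (-(2*a)) * x + 0 * x ^ 2) := by
    apply intervalIntegral.integral_congr
    intro x hx
    rw [Set.uIcc_of_le o4] at hx
    obtain ⟨h1, h2⟩ := hx
    rw [hg]
    simp only
    rw [min_eq_left (by linarith), max_eq_left (by linarith),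
        min_eq_right (by linarith), max_eq_left (by linarith)]
    ring
  have p5 : (∫ x in (1-a)..(1:ℝ), g x)
      = ∫ x in (1-a)..(1:ℝ), ((1+a)*(1+b) + (-(2+a+b)) * x + 1 * x ^ 2) := by
    apply intervalIntegral.integral_congr
    intro x hx
    rw [Set.uIcc_of_le o5] at hx
    obtain ⟨h1, h2⟩ := hx
    rw [hg]
    simp only
    rw [min_eq_right (by linarith), max_eq_left (by linarith),
        min_eq_right (by linarith), max_eq_left (by linarith)]
    ring
  rw [split, p1, p2, p3, p4, p5, two_star_quad_int, two_star_quad_int,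
      two_star_quad_int, two_star_quad_int, two_star_quad_int]
  ring
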